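/- Let X and Y be finite sets, T a stochastic matrix on X, Φ : X → Y a surjective map, and T̂ a stochastic matrix on Y such that for all x ∈ X and y ∈ Y, ∑_{z : Φ(z)=y} T(x,z) = T̂(Φ(x), y). If T is non-negatively curved, i.e. Γ(exp(tL)g) ≤ exp(tL)(Γg) pointwise for all g : X → ℝ and t ≥ 0, then T̂ is non-negatively curved, i.e. Γ̂(exp(tL̂)f) ≤ exp(tL̂)(Γ̂f) pointwise for all f : Y → ℝ and t ≥ 0. -/

import Mathlib

variable {X : Type*}

/-- `T` is a stochastic matrix: nonnegative entries and unit row sums. -/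
def IsStochastic [Fintype X] (T : X → X → ℝ) : Prop :=
  (∀ x y, 0 ≤ T x y) ∧ ∀ x, ∑ y, T x y = 1

/-- The generator: `(L f)(x) = ∑_y T(x,y) (f(y) - f(x))`. -/
noncomputable def gen [Fintype X] (T : X → X → ℝ) (f : X → ℝ) : X → ℝ :=
  fun x => ∑ y, T x y * (f y - f x)

/-- The carré du champ operator: `(Γ f)(x) = (1/2) ∑_y T(x,y) (f(y) - f(x))²`. -/
noncomputable def carre [Fintype X] (T : X → X → ℝ) (f : X → ℝ) : X → ℝ :=
  fun x => (1 / 2) * ∑ y, T x y * (f y - f x) ^ 2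

/-- The generator as a matrix: `L = T - Id`. -/
noncomputable def genMat [Fintype X] [DecidableEq X] (T : X → X → ℝ) : Matrix X X ℝ :=
  fun x y => T x y - if x = y then 1 else 0

/-- The heat semigroup `P_t = exp (t L)` (matrix exponential). -/
noncomputable def heatSG [Fintype X] [DecidableEq X] (T : X → X → ℝ) (t : ℝ) : Matrix X X ℝ :=
  NormedSpace.exp (t • genMat T)

/-- Evolution of a measure (row vector) `μ_t = μ · exp (t L)`. -/
noncomputable def evolve [Fintype X] [DecidableEq X] (T : X → X → ℝ) (μ : X → ℝ) (t : ℝ) :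
    X → ℝ :=
  Matrix.vecMul μ (heatSG T t)

section Aux

set_option linter.unusedSectionVars false

variable {Y : Type*} [Fintype X] [DecidableEq X] [Fintype Y] [DecidableEq Y]

open NormedSpace in
/-- If `A * P = P * B` then the matrix exponentials intertwine as well. -/
lemma exp_intertwine (A : Matrix X X ℝ) (B : Matrix Y Y ℝ) (P : Matrix X Y ℝ)
    (h : A * P = P * B) : exp A * P = P * exp B := by
  letI : SeminormedRing (Matrix X X ℝ) := Matrix.linftyOpSemiNormedRing
  letI : NormedRing (Matrix X X ℝ) := Matrix.linftyOpNormedRing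
  letI : NormedAlgebra ℝ (Matrix X X ℝ) := Matrix.linftyOpNormedAlgebra
  letI : SeminormedRing (Matrix Y Y ℝ) := Matrix.linftyOpSemiNormedRing
  letI : NormedRing (Matrix Y Y ℝ) := Matrix.linftyOpNormedRing
  letI : NormedAlgebra ℝ (Matrix Y Y ℝ) := Matrix.linftyOpNormedAlgebra
  have hpow : ∀ n : ℕ, A ^ n * P = P * B ^ n := by
    intro n
    induction n with
    | zero => simp
    | succ n ih =>
      rw [pow_succ', pow_succ', Matrix.mul_assoc, ih, ← Matrix.mul_assoc, h, Matrix.mul_assoc]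
  have hA : Summable fun n : ℕ => ((n.factorial : ℝ))⁻¹ • A ^ n := expSeries_summable' (𝕂 := ℝ) A
  have hB : Summable fun n : ℕ => ((n.factorial : ℝ))⁻¹ • B ^ n := expSeries_summable' (𝕂 := ℝ) B
  have hgR : Continuous fun M : Matrix X X ℝ => M * P :=
    continuous_id.matrix_mul continuous_const
  have hgL : Continuous fun M : Matrix Y Y ℝ => P * M :=
    continuous_const.matrix_mul continuous_id
  have h1 : HasSum (fun n : ℕ => (((n.factorial : ℝ))⁻¹ • A ^ n) * P) (exp A * P) := by
    rw [exp_eq_tsum ℝ]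
    exact hA.hasSum.map
      (AddMonoidHom.mk' (fun M : Matrix X X ℝ => M * P) fun a b => Matrix.add_mul a b P) hgR
  have h2 : HasSum (fun n : ℕ => P * (((n.factorial : ℝ))⁻¹ • B ^ n)) (P * exp B) := by
    rw [exp_eq_tsum ℝ]
    exact hB.hasSum.map
      (AddMonoidHom.mk' (fun M : Matrix Y Y ℝ => P * M) fun a b => Matrix.mul_add P a b) hgL
  have heq : (fun n : ℕ => (((n.factorial : ℝ))⁻¹ • A ^ n) * P)
      = fun n : ℕ => P * (((n.factorial : ℝ))⁻¹ • B ^ n) := by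
    funext n
    rw [Matrix.smul_mul, hpow, Matrix.mul_smul]
  rw [heq] at h1
  exact h1.unique h2

/-- The 0/1 projection ("lumping") matrix associated with `Φ`. -/
def projMat (Φ : X → Y) : Matrix X Y ℝ := fun x y => if Φ x = y then 1 else 0

lemma genMat_intertwine (T : X → X → ℝ) (T' : Y → Y → ℝ) (Φ : X → Y)
    (hproj : ∀ (x : X) (y : Y),
      ∑ z ∈ Finset.univ.filter fun z => Φ z = y, T x z = T' (Φ x) y) :
    genMat T * projMat Φ = projMat Φ * genMat T' := by
  funext x y
  have hl : (genMat T * projMat Φ) x y = T' (Φ x) y - if Φ x = y then 1 else 0 := by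
    simp only [Matrix.mul_apply, projMat, genMat, mul_ite, mul_one, mul_zero]
    rw [← Finset.sum_filter]
    rw [Finset.sum_sub_distrib, hproj]
    congr 1
    rw [Finset.sum_ite_eq (Finset.univ.filter fun z => Φ z = y) x (fun _ => (1 : ℝ))]
    simp
  have hr : (projMat Φ * genMat T') x y = T' (Φ x) y - if Φ x = y then 1 else 0 := by
    simp only [Matrix.mul_apply, projMat, genMat, ite_mul, one_mul, zero_mul]
    rw [Finset.sum_ite_eq Finset.univ (Φ x)]
    simp
  rw [hl, hr]

lemma projMat_mulVec (Φ : X → Y) (f : Y → ℝ) (x : X) :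
    (projMat Φ).mulVec f x = f (Φ x) := by
  simp [projMat, Matrix.mulVec, dotProduct, ite_mul, Finset.sum_ite_eq]

/-- The heat semigroups intertwine with the projection. -/
lemma heatSG_intertwine (T : X → X → ℝ) (T' : Y → Y → ℝ) (Φ : X → Y)
    (hproj : ∀ (x : X) (y : Y),
      ∑ z ∈ Finset.univ.filter fun z => Φ z = y, T x z = T' (Φ x) y)
    (t : ℝ) : heatSG T t * projMat Φ = projMat Φ * heatSG T' t := by
  apply exp_intertwine
  rw [Matrix.smul_mul (R := ℝ), Matrix.mul_smul (R := ℝ), genMat_intertwine T T' Φ hproj]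

/-- Key evolution identity at the vector level. -/
lemma heatSG_pullback (T : X → X → ℝ) (T' : Y → Y → ℝ) (Φ : X → Y)
    (hproj : ∀ (x : X) (y : Y),
      ∑ z ∈ Finset.univ.filter fun z => Φ z = y, T x z = T' (Φ x) y)
    (t : ℝ) (f : Y → ℝ) (x : X) :
    (heatSG T t).mulVec (fun z => f (Φ z)) x = (heatSG T' t).mulVec f (Φ x) := by
  have h1 : (fun z => f (Φ z)) = (projMat Φ).mulVec f := by
    funext z; rw [projMat_mulVec]
  rw [h1, Matrix.mulVec_mulVec, heatSG_intertwine T T' Φ hproj t, ← Matrix.mulVec_mulVec,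
    projMat_mulVec]

/-- The carré du champ operator commutes with pullback along a lumping map. -/
lemma carre_pullback (T : X → X → ℝ) (T' : Y → Y → ℝ) (Φ : X → Y)
    (hproj : ∀ (x : X) (y : Y),
      ∑ z ∈ Finset.univ.filter fun z => Φ z = y, T x z = T' (Φ x) y)
    (h : Y → ℝ) (x : X) :
    carre T (fun z => h (Φ z)) x = carre T' h (Φ x) := by
  unfold carre
  congr 1
  rw [← Finset.sum_fiberwise_of_maps_to (g := Φ) (fun z _ => Finset.mem_univ (Φ z))
    (fun z => T x z * (h (Φ z) - h (Φ x)) ^ 2)]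
  refine Finset.sum_congr rfl fun y _ => ?_
  rw [← hproj x y, Finset.sum_mul]
  refine Finset.sum_congr rfl fun z hz => ?_
  rw [Finset.mem_filter] at hz
  rw [hz.2]

end Aux

/-- Non-negative curvature is preserved under Markovian projection. -/
theorem markovian_projection_curvature {Y : Type*} [Fintype X] [DecidableEq X]
    [Fintype Y] [DecidableEq Y]
    (T : X → X → ℝ) (hT : IsStochastic T)
    (Φ : X → Y) (hsurj : Function.Surjective Φ)
    (T' : Y → Y → ℝ) (hT' : IsStochastic T')
    (hproj : ∀ (x : X) (y : Y),
      ∑ z ∈ Finset.univ.filter fun z => Φ z = y, T x z = T' (Φ x) y)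
    (hcurv : ∀ t : ℝ, 0 ≤ t → ∀ g : X → ℝ, ∀ x : X,
      carre T ((heatSG T t).mulVec g) x ≤ (heatSG T t).mulVec (carre T g) x) :
    ∀ t : ℝ, 0 ≤ t → ∀ f : Y → ℝ, ∀ y : Y,
      carre T' ((heatSG T' t).mulVec f) y ≤ (heatSG T' t).mulVec (carre T' f) y := by
  intro t ht f y
  obtain ⟨x, rfl⟩ := hsurj y
  calc carre T' ((heatSG T' t).mulVec f) (Φ x)
      = carre T (fun z => (heatSG T' t).mulVec f (Φ z)) x :=
        (carre_pullback T T' Φ hproj _ x).symm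
    _ = carre T ((heatSG T t).mulVec (fun z => f (Φ z))) x := by
        congr 1
        funext z
        exact (heatSG_pullback T T' Φ hproj t f z).symm
    _ ≤ (heatSG T t).mulVec (carre T (fun z => f (Φ z))) x := hcurv t ht _ x
    _ = (heatSG T t).mulVec (fun z => carre T' f (Φ z)) x := by
        congr 1
        funext z
        exact carre_pullback T T' Φ hproj f z
    _ = (heatSG T' t).mulVec (carre T' f) (Φ x) := heatSG_pullback T T' Φ hproj t _ x
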